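/- arXiv:2502.03503 — 2 statements merged into one kernel-verified Lean document; each statement's English description precedes it below -/
import Mathlib

section
/- (Lemma 1, at +∞, explicit form.) The multi-head attention output tends to a single linear function as x → +∞: Attn(x) − (x·A + B) → 0 in ℝ^d as x → +∞, where A = ∑_{h : α_h > 0} ζ_h + (1/(p+1))·∑_{h : α_h = 0} ζ_h and B = (min_{1 ≤ j ≤ p} x_j)·∑_{h : α_h < 0} ζ_h + ((∑_{j=1}^p x_j)/(p+1))·∑_{h : α_h = 0} ζ_h. -/
open Filter Real
open scoped Classical

/-- Denominator of the softmax attention: `D_α(x) = exp(α x²) + ∑ₖ exp(α x xₖ)`. -/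
noncomputable def attnDenom (p : ℕ) (xs : Fin p → ℝ) (α : ℝ) (x : ℝ) : ℝ :=
  Real.exp (α * x ^ 2) + ∑ k, Real.exp (α * x * xs k)

/-- Single-head softmax attention output
`A_α(x) = (∑ⱼ xⱼ exp(α x xⱼ) + x exp(α x²)) / D_α(x)`. -/
noncomputable def attnOut (p : ℕ) (xs : Fin p → ℝ) (α : ℝ) (x : ℝ) : ℝ :=
  (∑ j, xs j * Real.exp (α * x * xs j) + x * Real.exp (α * x ^ 2)) / attnDenom p xs α x

/-- Multi-head attention output `Attn(x) = ∑ₕ A_{αₕ}(x) • ζₕ` with values in ℝ^d. -/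
noncomputable def multiAttn (p : ℕ) (xs : Fin p → ℝ) (H d : ℕ) (αs : Fin H → ℝ)
    (ζ : Fin H → EuclideanSpace ℝ (Fin d)) (x : ℝ) : EuclideanSpace ℝ (Fin d) :=
  ∑ h, attnOut p xs (αs h) x • ζ h

lemma helperA : Tendsto (fun y : ℝ => y * Real.exp y) atBot (nhds 0) := by
  have h := Real.tendsto_pow_mul_exp_neg_atTop_nhds_zero 1
  have h2 := (h.comp tendsto_neg_atBot_atTop).neg
  simp only [Function.comp] at h2
  convert h2 using 2 with y
  · ring_nf
  · norm_num

lemma lin_atBot (c : ℝ) (hc : c < 0) : Tendsto (fun x : ℝ => c * x) atTop atBot := by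
  have h := Tendsto.const_mul_atTop (neg_pos.mpr hc) (tendsto_id (α := ℝ))
  have h2 := tendsto_neg_atTop_atBot.comp h
  refine h2.congr fun x => ?_
  simp [Function.comp]

lemma exp_lin_zero (c : ℝ) (hc : c < 0) : Tendsto (fun x : ℝ => Real.exp (c * x)) atTop (nhds 0) :=
  Real.tendsto_exp_atBot.comp (lin_atBot c hc)

lemma gtendsto (α c : ℝ) (hα : 0 < α) : Tendsto (fun x : ℝ => α * x * (c - x)) atTop atBot := by
  apply tendsto_atBot_mono' atTop (f₁ := fun x : ℝ => -α * x) _ (lin_atBot (-α) (by linarith))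
  · filter_upwards [eventually_ge_atTop (max c 0 + 1)] with x hx
    have h1 : c - x ≤ -1 := by have := le_max_left c 0; linarith
    have h2 : 0 ≤ x := by have := le_max_right c 0; linarith
    nlinarith [mul_le_mul_of_nonneg_left h1 (mul_nonneg hα.le h2)]

lemma keyPos (α c : ℝ) (hα : 0 < α) :
    Tendsto (fun x : ℝ => (c - x) * Real.exp (α * x * (c - x))) atTop (nhds 0) := by
  have hg := gtendsto α c hα
  have h1 : Tendsto (fun x : ℝ => (α * x * (c - x)) * Real.exp (α * x * (c - x))) atTop (nhds 0) :=
    helperA.comp hg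
  have h2 : Tendsto (fun x : ℝ => (α * x)⁻¹) atTop (nhds 0) :=
    Tendsto.inv_tendsto_atTop (Tendsto.const_mul_atTop hα tendsto_id)
  have h3 := h2.mul h1
  rw [zero_mul] at h3
  apply h3.congr'
  filter_upwards [eventually_gt_atTop (0:ℝ)] with x hx
  have : α * x ≠ 0 := by positivity
  field_simp

lemma Dpos (p : ℕ) (xs : Fin p → ℝ) (α x : ℝ) : 0 < attnDenom p xs α x := by
  unfold attnDenom
  positivity

lemma lim_zero (p : ℕ) (xs : Fin p → ℝ) (x : ℝ) :
    attnOut p xs 0 x = (x + ∑ j, xs j) / ((p : ℝ) + 1) := by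
  simp [attnOut, attnDenom]
  ring_nf

lemma lim_pos (p : ℕ) (xs : Fin p → ℝ) (α : ℝ) (hα : 0 < α) :
    Tendsto (fun x => attnOut p xs α x - x) atTop (nhds 0) := by
  have hnum : Tendsto (fun x => ∑ j, (xs j - x) * Real.exp (α * x * (xs j - x))) atTop
      (nhds 0) := by
    have := tendsto_finset_sum (Finset.univ : Finset (Fin p))
      (fun j (_ : j ∈ Finset.univ) => keyPos α (xs j) hα)
    simpa using this
  have hden : Tendsto (fun x => 1 + ∑ j, Real.exp (α * x * (xs j - x))) atTop (nhds 1) := by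
    have hs : Tendsto (fun x => ∑ j, Real.exp (α * x * (xs j - x))) atTop (nhds 0) := by
      have := tendsto_finset_sum (Finset.univ : Finset (Fin p))
        (fun j (_ : j ∈ Finset.univ) => Real.tendsto_exp_atBot.comp (gtendsto α (xs j) hα))
      simpa [Function.comp] using this
    simpa using (tendsto_const_nhds (x := (1:ℝ)) (f := atTop)).add hs
  have h := hnum.div hden (by norm_num)
  rw [zero_div] at h
  refine h.congr fun x => ?_
  simp only [Pi.div_apply]
  have hE : Real.exp (-(α * x ^ 2)) ≠ 0 := Real.exp_ne_zero _
  have hD : attnDenom p xs α x ≠ 0 := (Dpos p xs α x).ne'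
  have hnum_eq : ∑ j, (xs j - x) * Real.exp (α * x * (xs j - x))
      = (∑ j, (xs j - x) * Real.exp (α * x * xs j)) * Real.exp (-(α * x ^ 2)) := by
    rw [Finset.sum_mul]
    refine Finset.sum_congr rfl fun j _ => ?_
    rw [show α * x * (xs j - x) = α * x * xs j + -(α * x ^ 2) by ring, Real.exp_add]
    ring
  have hden_eq : 1 + ∑ j, Real.exp (α * x * (xs j - x))
      = attnDenom p xs α x * Real.exp (-(α * x ^ 2)) := by
    unfold attnDenom
    rw [add_mul, Finset.sum_mul]
    congr 1
    · rw [← Real.exp_add, add_neg_cancel, Real.exp_zero]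
    · refine Finset.sum_congr rfl fun j _ => ?_
      rw [← Real.exp_add, show α * x * xs j + -(α * x ^ 2) = α * x * (xs j - x) by ring]
  rw [hnum_eq, hden_eq, mul_div_mul_right _ _ hE]
  rw [attnOut, eq_sub_iff_add_eq, div_add' _ _ _ hD]
  congr 1
  unfold attnDenom
  rw [mul_add, Finset.mul_sum]
  simp only [sub_mul, Finset.sum_sub_distrib]
  ring

lemma lim_neg (p : ℕ) (xs : Fin p → ℝ) (α m : ℝ) (hα : α < 0)
    (hm : ∀ j, m ≤ xs j) (hex : ∃ j, xs j = m) :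
    Tendsto (fun x => attnOut p xs α x) atTop (nhds m) := by
  classical
  set S := Finset.univ.filter (fun j => xs j = m) with hS
  have hScard : 0 < S.card := by
    obtain ⟨j, hj⟩ := hex
    exact Finset.card_pos.mpr ⟨j, by simp [hS, hj]⟩
  have hc : (S.card : ℝ) ≠ 0 := by positivity
  -- the quadratic exponential term tends to 0
  have hquad : Tendsto (fun x : ℝ => x * Real.exp (α * x * (x - m))) atTop (nhds 0) := by
    have hβ : 0 < -α := by linarith
    have hrw : ∀ x : ℝ, α * x * (x - m) = -α * x * (m - x) := fun x => by ring
    have h1 : Tendsto (fun x : ℝ => (x - m) * Real.exp (α * x * (x - m))) atTop (nhds 0) := by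
      have := (keyPos (-α) m hβ).neg
      rw [neg_zero] at this
      refine this.congr fun x => ?_
      rw [hrw]; ring
    have h2 : Tendsto (fun x : ℝ => m * Real.exp (α * x * (x - m))) atTop (nhds 0) := by
      have := ((Real.tendsto_exp_atBot.comp (gtendsto (-α) m hβ)).const_mul m)
      rw [mul_zero] at this
      refine this.congr fun x => ?_
      simp only [Function.comp]
      rw [hrw]
    have := h1.add h2
    rw [add_zero] at this
    refine this.congr fun x => ?_
    ring
  -- terms of the sums
  have hterm : ∀ j : Fin p, Tendsto (fun x : ℝ => Real.exp (α * x * (xs j - m))) atTop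
      (nhds (if xs j = m then 1 else 0)) := by
    intro j
    by_cases hj : xs j = m
    · simp [hj]
    · have hlt : 0 < xs j - m := by
        have := hm j
        cases lt_or_eq_of_le this with
        | inl h => linarith
        | inr h => exact absurd h.symm hj
      have hcoef : α * (xs j - m) < 0 := mul_neg_of_neg_of_pos hα hlt
      have := exp_lin_zero _ hcoef
      simp only [hj, if_false]
      refine this.congr fun x => ?_
      ring_nf
  have hnum : Tendsto
      (fun x : ℝ => ∑ j, xs j * Real.exp (α * x * (xs j - m)) + x * Real.exp (α * x * (x - m)))
      atTop (nhds (m * S.card)) := by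
    have hsum : Tendsto (fun x : ℝ => ∑ j, xs j * Real.exp (α * x * (xs j - m))) atTop
        (nhds (∑ j, xs j * (if xs j = m then 1 else 0))) :=
      tendsto_finset_sum _ (fun j _ => (hterm j).const_mul (xs j))
    have hval : (∑ j, xs j * (if xs j = m then 1 else 0)) = m * S.card := by
      rw [show (∑ j, xs j * if xs j = m then 1 else 0)
            = ∑ j, (if xs j = m then m else 0) from
          Finset.sum_congr rfl fun j _ => by by_cases hj : xs j = m <;> simp [hj]]
      rw [← Finset.sum_filter, Finset.sum_const, nsmul_eq_mul, mul_comm, hS]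
    rw [hval] at hsum
    have := hsum.add hquad
    rw [add_zero] at this
    exact this
  have hden : Tendsto
      (fun x : ℝ => Real.exp (α * x * (x - m)) + ∑ j, Real.exp (α * x * (xs j - m)))
      atTop (nhds (S.card : ℝ)) := by
    have hq : Tendsto (fun x : ℝ => Real.exp (α * x * (x - m))) atTop (nhds 0) := by
      have hβ : 0 < -α := by linarith
      have := Real.tendsto_exp_atBot.comp (gtendsto (-α) m hβ)
      refine this.congr fun x => ?_
      simp only [Function.comp]
      congr 1
      ring
    have hsum : Tendsto (fun x : ℝ => ∑ j, Real.exp (α * x * (xs j - m))) atTop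
        (nhds (∑ j, (if xs j = m then (1:ℝ) else 0))) :=
      tendsto_finset_sum _ (fun j _ => hterm j)
    have hval : (∑ j, (if xs j = m then (1:ℝ) else 0)) = S.card := by
      rw [Finset.sum_boole, hS]
    rw [hval] at hsum
    have := hq.add hsum
    rw [zero_add] at this
    exact this
  have h := hnum.div hden hc
  rw [mul_div_assoc, div_self hc, mul_one] at h
  refine h.congr fun x => ?_
  simp only [Pi.div_apply]
  have hF : Real.exp (-(α * x * m)) ≠ 0 := Real.exp_ne_zero _
  have hnum_eq : (∑ j, xs j * Real.exp (α * x * (xs j - m)) + x * Real.exp (α * x * (x - m)))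
      = (∑ j, xs j * Real.exp (α * x * xs j) + x * Real.exp (α * x ^ 2)) * Real.exp (-(α * x * m)) := by
    rw [add_mul, Finset.sum_mul]
    congr 1
    · refine Finset.sum_congr rfl fun j _ => ?_
      rw [show α * x * (xs j - m) = α * x * xs j + -(α * x * m) by ring, Real.exp_add]
      ring
    · rw [show α * x * (x - m) = α * x ^ 2 + -(α * x * m) by ring, Real.exp_add]
      ring
  have hden_eq : (Real.exp (α * x * (x - m)) + ∑ j, Real.exp (α * x * (xs j - m)))
      = attnDenom p xs α x * Real.exp (-(α * x * m)) := by
    unfold attnDenom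
    rw [add_mul, Finset.sum_mul]
    congr 1
    · rw [show α * x * (x - m) = α * x ^ 2 + -(α * x * m) by ring, Real.exp_add]
    · refine Finset.sum_congr rfl fun j _ => ?_
      rw [show α * x * (xs j - m) = α * x * xs j + -(α * x * m) by ring, Real.exp_add]
  rw [hnum_eq, hden_eq, mul_div_mul_right _ _ hF, attnOut]

theorem stmt_6 (p : ℕ) (hp : 1 ≤ p) (xs : Fin p → ℝ) (H d : ℕ) (hH : 1 ≤ H) (hd : 1 ≤ d)
    (αs : Fin H → ℝ) (ζ : Fin H → EuclideanSpace ℝ (Fin d))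
    (A B : EuclideanSpace ℝ (Fin d))
    (hA : A = (∑ h ∈ Finset.univ.filter fun h => 0 < αs h, ζ h) +
      ((p : ℝ) + 1)⁻¹ • ∑ h ∈ Finset.univ.filter fun h => αs h = 0, ζ h)
    (hB : B = (Finset.univ.inf' ⟨⟨0, hp⟩, Finset.mem_univ _⟩ xs) •
        (∑ h ∈ Finset.univ.filter fun h => αs h < 0, ζ h) +
      ((∑ j, xs j) / ((p : ℝ) + 1)) • ∑ h ∈ Finset.univ.filter fun h => αs h = 0, ζ h) :
    Filter.Tendsto (fun x : ℝ => multiAttn p xs H d αs ζ x - (x • A + B))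
      Filter.atTop (nhds 0) := by
  classical
  set m : ℝ := Finset.univ.inf' ⟨⟨0, hp⟩, Finset.mem_univ _⟩ xs with hmdef
  set t : ℝ := ∑ j, xs j with htdef
  have hm : ∀ j, m ≤ xs j := fun j => Finset.inf'_le _ (Finset.mem_univ j)
  have hex : ∃ j, xs j = m := by
    obtain ⟨j, _, hj⟩ := Finset.exists_mem_eq_inf' (⟨⟨0, hp⟩, Finset.mem_univ _⟩ :
      (Finset.univ : Finset (Fin p)).Nonempty) xs
    exact ⟨j, hj.symm⟩
  set L : Fin H → ℝ → ℝ := fun h x =>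
    if 0 < αs h then x else if αs h < 0 then m else (x + t) / ((p : ℝ) + 1) with hLdef
  -- sum decomposition
  have hsplit : ∀ f : Fin H → EuclideanSpace ℝ (Fin d),
      ∑ h, f h = (∑ h ∈ Finset.univ.filter fun h => 0 < αs h, f h) +
        (∑ h ∈ Finset.univ.filter fun h => αs h < 0, f h) +
        (∑ h ∈ Finset.univ.filter fun h => αs h = 0, f h) := by
    intro f
    have h1 := Finset.sum_filter_add_sum_filter_not Finset.univ (fun h => 0 < αs h) f
    have h2 := Finset.sum_filter_add_sum_filter_not
      (Finset.univ.filter fun h => ¬ 0 < αs h) (fun h => αs h < 0) f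
    have e1 : (Finset.univ.filter fun h => ¬ 0 < αs h).filter (fun h => αs h < 0)
        = Finset.univ.filter fun h => αs h < 0 := by
      rw [Finset.filter_filter]
      apply Finset.filter_congr
      intro h _
      constructor
      · exact fun hh => hh.2
      · exact fun hh => ⟨by simp; linarith, hh⟩
    have e2 : (Finset.univ.filter fun h => ¬ 0 < αs h).filter (fun h => ¬ αs h < 0)
        = Finset.univ.filter fun h => αs h = 0 := by
      rw [Finset.filter_filter]
      apply Finset.filter_congr
      intro h _
      constructor
      · rintro ⟨h1', h2'⟩
        simp at h1' h2'
        linarith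
      · intro hh
        constructor <;> simp [hh]
    rw [e1, e2] at h2
    rw [← h1, ← h2]
    abel
  -- pointwise identity
  have hfun : ∀ x : ℝ, multiAttn p xs H d αs ζ x - (x • A + B)
      = ∑ h, (attnOut p xs (αs h) x - L h x) • ζ h := by
    intro x
    have hLsum : x • A + B = ∑ h, L h x • ζ h := by
      rw [hsplit (fun h => L h x • ζ h)]
      have c1 : (∑ h ∈ Finset.univ.filter fun h => 0 < αs h, L h x • ζ h)
          = x • ∑ h ∈ Finset.univ.filter fun h => 0 < αs h, ζ h := by
        rw [Finset.smul_sum]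
        refine Finset.sum_congr rfl fun h hh => ?_
        rw [Finset.mem_filter] at hh
        simp [hLdef, hh.2]
      have c2 : (∑ h ∈ Finset.univ.filter fun h => αs h < 0, L h x • ζ h)
          = m • ∑ h ∈ Finset.univ.filter fun h => αs h < 0, ζ h := by
        rw [Finset.smul_sum]
        refine Finset.sum_congr rfl fun h hh => ?_
        rw [Finset.mem_filter] at hh
        have : ¬ 0 < αs h := by linarith [hh.2]
        simp [hLdef, this, hh.2]
      have c3 : (∑ h ∈ Finset.univ.filter fun h => αs h = 0, L h x • ζ h)
          = ((x + t) / ((p : ℝ) + 1)) • ∑ h ∈ Finset.univ.filter fun h => αs h = 0, ζ h := by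
        rw [Finset.smul_sum]
        refine Finset.sum_congr rfl fun h hh => ?_
        rw [Finset.mem_filter] at hh
        have h1' : ¬ 0 < αs h := by rw [hh.2]; exact lt_irrefl 0
        have h2' : ¬ αs h < 0 := by rw [hh.2]; exact lt_irrefl 0
        simp [hLdef, h1', h2']
      rw [c1, c2, c3, hA, hB, smul_add, smul_smul]
      rw [show ((x + t) / ((p : ℝ) + 1)) = x * ((p : ℝ) + 1)⁻¹ + t / ((p : ℝ) + 1) by ring]
      rw [add_smul]
      abel
    rw [hLsum, multiAttn, ← Finset.sum_sub_distrib]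
    refine Finset.sum_congr rfl fun h _ => ?_
    rw [sub_smul]
  refine Tendsto.congr (fun x => (hfun x).symm) ?_
  have : Tendsto (fun x : ℝ => ∑ h, (attnOut p xs (αs h) x - L h x) • ζ h) atTop
      (nhds (∑ h : Fin H, (0 : EuclideanSpace ℝ (Fin d)))) := by
    refine tendsto_finset_sum _ fun h _ => ?_
    have hscal : Tendsto (fun x : ℝ => attnOut p xs (αs h) x - L h x) atTop (nhds 0) := by
      rcases lt_trichotomy (αs h) 0 with hneg | hzero | hpos
      · have : ¬ 0 < αs h := by linarith
        simp only [hLdef, this, if_false, hneg, if_true]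
        have := (lim_neg p xs (αs h) m hneg hm hex).sub_const m
        simpa using this
      · have h1' : ¬ 0 < αs h := by rw [hzero]; exact lt_irrefl 0
        have h2' : ¬ αs h < 0 := by rw [hzero]; exact lt_irrefl 0
        simp only [hLdef, h1', if_false, h2']
        have : ∀ x : ℝ, attnOut p xs (αs h) x - (x + t) / ((p : ℝ) + 1) = 0 := by
          intro x
          rw [hzero, lim_zero, htdef, sub_self]
        simpa [this] using tendsto_const_nhds (x := (0:ℝ)) (f := atTop)
      · simp only [hLdef, hpos, if_true]
        exact lim_pos p xs (αs h) hpos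
    have := hscal.smul_const (ζ h)
    simpa using this
  simpa using this
end

section
/- (Lemma 1, at −∞.) The multi-head attention output tends to a single linear function as x → −∞: Attn(x) − (x·A + B′) → 0 in ℝ^d as x → −∞, where A = ∑_{h : α_h > 0} ζ_h + (1/(p+1))·∑_{h : α_h = 0} ζ_h and B′ = (max_{1 ≤ j ≤ p} x_j)·∑_{h : α_h < 0} ζ_h + ((∑_{j=1}^p x_j)/(p+1))·∑_{h : α_h = 0} ζ_h. -/
open Filter Real
open scoped Classical

lemma attnDenom_pos (p : ℕ) (xs : Fin p → ℝ) (α : ℝ) (x : ℝ) : 0 < attnDenom p xs α x :=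
  add_pos_of_pos_of_nonneg (Real.exp_pos _) (Finset.sum_nonneg fun _ _ => (Real.exp_pos _).le)

lemma exp_le_attnDenom (p : ℕ) (xs : Fin p → ℝ) (α : ℝ) (x : ℝ) :
    Real.exp (α * x ^ 2) ≤ attnDenom p xs α x :=
  le_add_of_nonneg_right (Finset.sum_nonneg fun _ _ => (Real.exp_pos _).le)

lemma tend_aux (a : ℝ) : Tendsto (fun x : ℝ => (a - x) * Real.exp (x - a)) atBot (nhds 0) := by
  have h1 : Tendsto (fun x : ℝ => a - x) atBot atTop := by
    simpa [sub_eq_add_neg] using tendsto_atTop_add_const_left atBot a tendsto_neg_atBot_atTop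
  have h2 := tendsto_pow_mul_exp_neg_atTop_nhds_zero 1
  have := h2.comp h1
  simpa [Function.comp_def, neg_sub] using this

lemma head_pos (p : ℕ) (xs : Fin p → ℝ) (α : ℝ) (hα : 0 < α) :
    Tendsto (fun x => attnOut p xs α x - x) atBot (nhds 0) := by
  have hD := attnDenom_pos p xs α
  have key : ∀ x, attnOut p xs α x - x
      = ∑ j, (xs j - x) * Real.exp (α * x * xs j) / attnDenom p xs α x := by
    intro x
    rw [attnOut, div_sub' (hD x).ne', ← Finset.sum_div]
    congr 1
    rw [attnDenom,
      show ∑ j, (xs j - x) * Real.exp (α * x * xs j)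
        = ∑ j, xs j * Real.exp (α * x * xs j) - ∑ j, x * Real.exp (α * x * xs j) by
        rw [← Finset.sum_sub_distrib]; exact Finset.sum_congr rfl fun j _ => by ring,
      ← Finset.mul_sum]
    ring
  rw [funext key]
  have h0 : (0 : ℝ) = ∑ _j : Fin p, (0 : ℝ) := by simp
  rw [h0]
  refine tendsto_finset_sum _ fun j _ => ?_
  refine squeeze_zero_norm' ?_ (tend_aux (xs j))
  filter_upwards [eventually_le_atBot (min (xs j) (-α⁻¹))] with x hx
  have hx1 : x ≤ xs j := le_trans hx (min_le_left _ _)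
  have hx2 : x ≤ -α⁻¹ := le_trans hx (min_le_right _ _)
  have ht : 0 ≤ xs j - x := by linarith
  have hαx : α * x ≤ -1 := by
    have := mul_le_mul_of_nonneg_left hx2 hα.le
    rwa [mul_neg, mul_inv_cancel₀ hα.ne'] at this
  have hEle : Real.exp (α * x * xs j) / attnDenom p xs α x
      ≤ Real.exp (α * x * xs j - α * x ^ 2) := by
    rw [Real.exp_sub]
    exact div_le_div_of_nonneg_left (Real.exp_pos _).le (Real.exp_pos _)
      (exp_le_attnDenom p xs α x)
  calc |(xs j - x) * Real.exp (α * x * xs j) / attnDenom p xs α x|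
      = (xs j - x) * (Real.exp (α * x * xs j) / attnDenom p xs α x) := by
        rw [abs_of_nonneg, mul_div_assoc]
        exact div_nonneg (mul_nonneg ht (Real.exp_pos _).le) (hD x).le
    _ ≤ (xs j - x) * Real.exp (α * x * xs j - α * x ^ 2) :=
        mul_le_mul_of_nonneg_left hEle ht
    _ ≤ (xs j - x) * Real.exp (x - xs j) :=
        mul_le_mul_of_nonneg_left (Real.exp_le_exp.mpr (by
          nlinarith [mul_le_mul_of_nonneg_right hαx ht])) ht

lemma head_zero (p : ℕ) (xs : Fin p → ℝ) (x : ℝ) :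
    attnOut p xs 0 x = (∑ j, xs j + x) / ((p : ℝ) + 1) := by
  simp [attnOut, attnDenom, add_comm (1 : ℝ)]

lemma head_neg (p : ℕ) (hp : 1 ≤ p) (xs : Fin p → ℝ) (α : ℝ) (hα : α < 0) :
    Tendsto (fun x => attnOut p xs α x
      - Finset.univ.sup' ⟨⟨0, hp⟩, Finset.mem_univ _⟩ xs) atBot (nhds 0) := by
  set M := Finset.univ.sup' ⟨⟨0, hp⟩, Finset.mem_univ _⟩ xs with hMdef
  have hM : ∀ j, xs j ≤ M := fun j => Finset.le_sup' xs (Finset.mem_univ j)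
  obtain ⟨j0, -, hj0⟩ := Finset.exists_mem_eq_sup' (⟨⟨0, hp⟩, Finset.mem_univ _⟩ :
    (Finset.univ : Finset (Fin p)).Nonempty) xs
  have hD := attnDenom_pos p xs α
  have hDM : ∀ x, Real.exp (α * x * M) ≤ attnDenom p xs α x := by
    intro x
    calc Real.exp (α * x * M) = Real.exp (α * x * xs j0) := by rw [hMdef, hj0]
      _ ≤ ∑ k, Real.exp (α * x * xs k) :=
          Finset.single_le_sum (f := fun k => Real.exp (α * x * xs k))
            (fun k _ => (Real.exp_pos _).le) (Finset.mem_univ j0)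
      _ ≤ _ := le_add_of_nonneg_left (Real.exp_pos _).le
  have key : ∀ x, attnOut p xs α x - M
      = (∑ j, (xs j - M) * Real.exp (α * x * xs j) / attnDenom p xs α x)
        + (x - M) * Real.exp (α * x ^ 2) / attnDenom p xs α x := by
    intro x
    rw [attnOut, div_sub' (hD x).ne', ← Finset.sum_div, ← add_div]
    congr 1
    rw [attnDenom,
      show ∑ j, (xs j - M) * Real.exp (α * x * xs j)
        = ∑ j, xs j * Real.exp (α * x * xs j) - ∑ j, M * Real.exp (α * x * xs j) by
        rw [← Finset.sum_sub_distrib]; exact Finset.sum_congr rfl fun j _ => by ring,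
      ← Finset.mul_sum]
    ring
  rw [funext key, show (0 : ℝ) = (∑ _j : Fin p, (0 : ℝ)) + 0 by simp]
  refine Tendsto.add (tendsto_finset_sum _ fun j _ => ?_) ?_
  · rcases eq_or_lt_of_le (hM j) with hj | hj
    · simp [hj]
    · have hc : 0 < α * (xs j - M) := mul_pos_of_neg_of_neg hα (by linarith)
      have hlin : Tendsto (fun x : ℝ => α * (xs j - M) * x) atBot atBot :=
        Tendsto.const_mul_atBot hc tendsto_id
      have hg : Tendsto (fun x : ℝ => (M - xs j) * Real.exp (α * (xs j - M) * x))
          atBot (nhds 0) := by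
        have := (Real.tendsto_exp_atBot.comp hlin).const_mul (M - xs j)
        simpa [Function.comp_def] using this
      refine squeeze_zero_norm' (Eventually.of_forall fun x => ?_) hg
      have h1 : Real.exp (α * x * xs j) / attnDenom p xs α x
          ≤ Real.exp (α * x * xs j - α * x * M) := by
        rw [Real.exp_sub]
        exact div_le_div_of_nonneg_left (Real.exp_pos _).le (Real.exp_pos _) (hDM x)
      calc |(xs j - M) * Real.exp (α * x * xs j) / attnDenom p xs α x|
          = (M - xs j) * (Real.exp (α * x * xs j) / attnDenom p xs α x) := by
            rw [abs_of_nonpos, mul_div_assoc]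
            · ring
            · apply div_nonpos_of_nonpos_of_nonneg _ (hD x).le
              exact mul_nonpos_of_nonpos_of_nonneg (by linarith) (Real.exp_pos _).le
        _ ≤ (M - xs j) * Real.exp (α * x * xs j - α * x * M) :=
            mul_le_mul_of_nonneg_left h1 (by linarith)
        _ = (M - xs j) * Real.exp (α * (xs j - M) * x) := by ring_nf
  · refine squeeze_zero_norm' ?_ (tend_aux M)
    filter_upwards [eventually_le_atBot (min M α⁻¹)] with x hx
    have hx1 : x ≤ M := le_trans hx (min_le_left _ _)
    have hx2 : x ≤ α⁻¹ := le_trans hx (min_le_right _ _)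
    have hαx : 1 ≤ α * x := by
      have := mul_le_mul_of_nonpos_left hx2 hα.le
      rwa [mul_inv_cancel₀ hα.ne] at this
    have h1 : Real.exp (α * x ^ 2) / attnDenom p xs α x
        ≤ Real.exp (α * x ^ 2 - α * x * M) := by
      rw [Real.exp_sub]
      exact div_le_div_of_nonneg_left (Real.exp_pos _).le (Real.exp_pos _) (hDM x)
    calc |(x - M) * Real.exp (α * x ^ 2) / attnDenom p xs α x|
        = (M - x) * (Real.exp (α * x ^ 2) / attnDenom p xs α x) := by
          rw [abs_of_nonpos, mul_div_assoc]
          · ring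
          · apply div_nonpos_of_nonpos_of_nonneg _ (hD x).le
            exact mul_nonpos_of_nonpos_of_nonneg (by linarith) (Real.exp_pos _).le
      _ ≤ (M - x) * Real.exp (α * x ^ 2 - α * x * M) :=
          mul_le_mul_of_nonneg_left h1 (by linarith)
      _ ≤ (M - x) * Real.exp (x - M) :=
          mul_le_mul_of_nonneg_left (Real.exp_le_exp.mpr (by
            nlinarith [mul_nonneg (sub_nonneg.mpr hαx) (sub_nonneg.mpr hx1)])) (by linarith)

theorem stmt_7 (p : ℕ) (hp : 1 ≤ p) (xs : Fin p → ℝ) (H d : ℕ) (hH : 1 ≤ H) (hd : 1 ≤ d)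
    (αs : Fin H → ℝ) (ζ : Fin H → EuclideanSpace ℝ (Fin d))
    (A B' : EuclideanSpace ℝ (Fin d))
    (hA : A = (∑ h ∈ Finset.univ.filter fun h => 0 < αs h, ζ h) +
      ((p : ℝ) + 1)⁻¹ • ∑ h ∈ Finset.univ.filter fun h => αs h = 0, ζ h)
    (hB' : B' = (Finset.univ.sup' ⟨⟨0, hp⟩, Finset.mem_univ _⟩ xs) •
        (∑ h ∈ Finset.univ.filter fun h => αs h < 0, ζ h) +
      ((∑ j, xs j) / ((p : ℝ) + 1)) • ∑ h ∈ Finset.univ.filter fun h => αs h = 0, ζ h) :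
    Filter.Tendsto (fun x : ℝ => multiAttn p xs H d αs ζ x - (x • A + B'))
      Filter.atBot (nhds 0) := by
  set L : ℝ → ℝ := fun α => if 0 < α then (1:ℝ) else if α = 0 then ((p : ℝ) + 1)⁻¹ else 0
    with hLdef
  set C : ℝ → ℝ := fun α => if α < 0 then Finset.univ.sup' ⟨⟨0, hp⟩, Finset.mem_univ _⟩ xs
      else if α = 0 then (∑ j, xs j) / ((p : ℝ) + 1) else 0 with hCdef
  have hsum : ∀ x : ℝ, x • A + B' = ∑ h, (L (αs h) * x + C (αs h)) • ζ h := by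
    intro x
    rw [hA, hB']
    simp only [hLdef, hCdef, Finset.sum_filter, smul_add, Finset.smul_sum, smul_smul,
      ← Finset.sum_add_distrib]
    refine Finset.sum_congr rfl fun h _ => ?_
    rcases lt_trichotomy (αs h) 0 with hc | hc | hc
    · simp [hc, hc.ne, not_lt.mpr hc.le, add_smul]
    · simp [hc, add_smul, mul_comm]
    · simp [hc, hc.ne', not_lt.mpr hc.le, add_smul, mul_comm]
  have headlim : ∀ h : Fin H,
      Tendsto (fun x => attnOut p xs (αs h) x - (L (αs h) * x + C (αs h))) atBot (nhds 0) := by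
    intro h
    rcases lt_trichotomy (αs h) 0 with hc | hc | hc
    · simpa [hLdef, hCdef, hc, hc.ne, not_lt.mpr hc.le] using head_neg p hp xs (αs h) hc
    · have hp1 : ((p : ℝ) + 1) ≠ 0 := by positivity
      have : ∀ x : ℝ, attnOut p xs (αs h) x - (L (αs h) * x + C (αs h)) = 0 := by
        intro x
        rw [hc, head_zero p xs x]
        simp only [hLdef, hCdef, if_neg (lt_irrefl (0:ℝ)), if_pos rfl]
        field_simp
        simp only [↓reduceIte]
        have hp2 : (1 + (p : ℝ)) ≠ 0 := by positivity
        field_simp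
        ring
      simpa [funext this] using (tendsto_const_nhds : Tendsto (fun _ : ℝ => (0:ℝ)) atBot (nhds 0))
    · simpa [hLdef, hCdef, hc, hc.ne', not_lt.mpr hc.le] using head_pos p xs (αs h) hc
  have heq : (fun x : ℝ => multiAttn p xs H d αs ζ x - (x • A + B'))
      = fun x => ∑ h, (attnOut p xs (αs h) x - (L (αs h) * x + C (αs h))) • ζ h := by
    funext x
    rw [hsum x, multiAttn, ← Finset.sum_sub_distrib]
    exact Finset.sum_congr rfl fun h _ => (sub_smul _ _ _).symm
  rw [heq]
  have := tendsto_finset_sum Finset.univ fun h (_ : h ∈ Finset.univ) =>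
    (headlim h).smul_const (ζ h)
  simpa using this
end
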